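/- arXiv:2507.00009 — 6 statements merged into one kernel-verified Lean document; each statement's English description precedes it below -/
import Mathlib

section
/- For a real Hilbert space H, any orthogonal projection P, and any x, y ∈ H, ‖x‖²·‖y‖² − ⟨x,y⟩² ≥ (‖Px‖·‖P^⊥y‖ − ‖Py‖·‖P^⊥x‖)². -/
open RealInnerProductSpace


theorem stmt10 {H : Type*} [NormedAddCommGroup H] [InnerProductSpace ℝ H] [CompleteSpace H]
    (P : H →L[ℝ] H) (hP : IsIdempotentElem P) (hsa : IsSelfAdjoint P) (x y : H) :
    ‖x‖ ^ 2 * ‖y‖ ^ 2 - ⟪x, y⟫ ^ 2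
      ≥ (‖P x‖ * ‖y - P y‖ - ‖P y‖ * ‖x - P x‖) ^ 2 := by
  have hsym : ∀ u v : H, ⟪P u, v⟫ = ⟪u, P v⟫ := fun u v =>
    hsa.isSymmetric u v
  have hPP : ∀ v : H, P (P v) = P v := fun v => by
    have := DFunLike.congr_fun hP v
    simpa using this
  have hcross : ∀ u v : H, ⟪P u, v - P v⟫ = 0 := by
    intro u v
    rw [hsym]
    have : P (v - P v) = 0 := by simp [map_sub, hPP]
    rw [this, inner_zero_right]
  have hx : ‖x‖ ^ 2 = ‖P x‖ ^ 2 + ‖x - P x‖ ^ 2 := by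
    have h := norm_add_sq_real (P x) (x - P x)
    rw [hcross x x] at h
    simpa using h
  have hy : ‖y‖ ^ 2 = ‖P y‖ ^ 2 + ‖y - P y‖ ^ 2 := by
    have h := norm_add_sq_real (P y) (y - P y)
    rw [hcross y y] at h
    simpa using h
  have hinner : ⟪x, y⟫ = ⟪P x, P y⟫ + ⟪x - P x, y - P y⟫ := by
    have hx' : x = P x + (x - P x) := by abel
    have hy' : y = P y + (y - P y) := by abel
    have h2 : ⟪x - P x, P y⟫ = 0 := by
      rw [real_inner_comm]; exact hcross y x
    calc ⟪x, y⟫ = ⟪P x + (x - P x), P y + (y - P y)⟫ := by rw [← hx', ← hy']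
      _ = ⟪P x, P y⟫ + ⟪P x, y - P y⟫ + (⟪x - P x, P y⟫ + ⟪x - P x, y - P y⟫) := by
          rw [inner_add_left, inner_add_right, inner_add_right]
      _ = ⟪P x, P y⟫ + ⟪x - P x, y - P y⟫ := by rw [hcross x y, h2]; ring
  have ha := abs_real_inner_le_norm (P x) (P y)
  have hb := abs_real_inner_le_norm (x - P x) (y - P y)
  have ha1 : ⟪P x, P y⟫ ≤ ‖P x‖ * ‖P y‖ := (abs_le.mp ha).2
  have ha2 : -(‖P x‖ * ‖P y‖) ≤ ⟪P x, P y⟫ := (abs_le.mp ha).1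
  have hb1 : ⟪x - P x, y - P y⟫ ≤ ‖x - P x‖ * ‖y - P y‖ := (abs_le.mp hb).2
  have hb2 : -(‖x - P x‖ * ‖y - P y‖) ≤ ⟪x - P x, y - P y⟫ := (abs_le.mp hb).1
  rw [hx, hy, hinner]
  nlinarith [mul_nonneg (mul_nonneg (norm_nonneg (P x)) (norm_nonneg (P y)))
      (mul_nonneg (norm_nonneg (x - P x)) (norm_nonneg (y - P y))),
    sq_nonneg (‖P x‖ * ‖P y‖ + ‖x - P x‖ * ‖y - P y‖ - ⟪P x, P y⟫ - ⟪x - P x, y - P y⟫),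
    sq_nonneg (‖P x‖ * ‖P y‖ + ‖x - P x‖ * ‖y - P y‖ + ⟪P x, P y⟫ + ⟪x - P x, y - P y⟫),
    mul_nonneg (norm_nonneg (P x)) (norm_nonneg (y - P y)),
    mul_nonneg (norm_nonneg (P y)) (norm_nonneg (x - P x))]
end

section
/- (Enhanced Richard inequality) For a real Hilbert space H, any orthogonal projection P, and any x, y ∈ H, |2⟨Px, y⟩ − ⟨x,y⟩| ≤ ‖Px‖·‖Py‖ + ‖P^⊥x‖·‖P^⊥y‖. -/
open RealInnerProductSpace


theorem stmt12 {H : Type*} [NormedAddCommGroup H] [InnerProductSpace ℝ H] [CompleteSpace H]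
    (P : H →L[ℝ] H) (hP : IsIdempotentElem P) (hsa : IsSelfAdjoint P) (x y : H) :
    |2 * ⟪P x, y⟫ - ⟪x, y⟫| ≤ ‖P x‖ * ‖P y‖ + ‖x - P x‖ * ‖y - P y‖ := by
  have hadj : ∀ u v : H, ⟪P u, v⟫ = ⟪u, P v⟫ := fun u v => hsa.isSymmetric u v
  have hPP : ∀ u : H, P (P u) = P u := fun u => by
    have := congrArg (fun f : H →L[ℝ] H => f u) hP
    simpa using this
  have hPxy : ⟪P x, P y⟫ = ⟪P x, y⟫ := by
    rw [← hadj (P x) y, hPP]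
  have key : 2 * ⟪P x, y⟫ - ⟪x, y⟫ = ⟪P x, P y⟫ - ⟪x - P x, y - P y⟫ := by
    have h1 : ⟪x, P y⟫ = ⟪P x, y⟫ := (hadj x y).symm
    simp only [inner_sub_left, inner_sub_right, hPxy, h1]
    ring
  rw [key]
  calc |⟪P x, P y⟫ - ⟪x - P x, y - P y⟫|
      ≤ |⟪P x, P y⟫| + |⟪x - P x, y - P y⟫| := abs_sub _ _
    _ ≤ ‖P x‖ * ‖P y‖ + ‖x - P x‖ * ‖y - P y‖ :=
        add_le_add (abs_real_inner_le_norm _ _) (abs_real_inner_le_norm _ _)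
end

section
/- (Enhanced Buzano inequality) For a real Hilbert space H, any orthogonal projection P, and any x, y ∈ H, 2|⟨Px, y⟩| ≤ ‖Px‖·‖Py‖ + ‖P^⊥x‖·‖P^⊥y‖ + |⟨x,y⟩|. -/
open RealInnerProductSpace


theorem stmt13 {H : Type*} [NormedAddCommGroup H] [InnerProductSpace ℝ H] [CompleteSpace H]
    (P : H →L[ℝ] H) (hP : IsIdempotentElem P) (hsa : IsSelfAdjoint P) (x y : H) :
    2 * |⟪P x, y⟫| ≤ ‖P x‖ * ‖P y‖ + ‖x - P x‖ * ‖y - P y‖ + |⟪x, y⟫| := by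
  have hsym : ∀ u v : H, ⟪P u, v⟫ = ⟪u, P v⟫ :=
    (ContinuousLinearMap.isSelfAdjoint_iff_isSymmetric.mp hsa)
  have hPP : ∀ u : H, P (P u) = P u := by
    intro u
    have := DFunLike.congr_fun hP u
    simpa using this
  have hkey : ⟪P x, y⟫ = ⟪P x, P y⟫ := by
    rw [← hsym (P x) y, hPP]
  have hxy : ⟪x, P y⟫ = ⟪P x, P y⟫ := by rw [← hsym, hkey]
  have h2 : ⟪x - P x, y - P y⟫ = ⟪x, y⟫ - ⟪P x, P y⟫ := by
    simp only [inner_sub_left, inner_sub_right, hkey, hxy]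
    ring
  have hid : (2 : ℝ) * ⟪P x, y⟫ = ⟪P x, P y⟫ + ⟪x, y⟫ - ⟪x - P x, y - P y⟫ := by
    rw [h2, hkey]; ring
  have cs1 : |⟪P x, P y⟫| ≤ ‖P x‖ * ‖P y‖ := abs_real_inner_le_norm _ _
  have cs2 : |⟪x - P x, y - P y⟫| ≤ ‖x - P x‖ * ‖y - P y‖ := abs_real_inner_le_norm _ _
  calc 2 * |⟪P x, y⟫| = |(2 : ℝ) * ⟪P x, y⟫| := by rw [abs_mul]; simp
    _ = |⟪P x, P y⟫ + ⟪x, y⟫ - ⟪x - P x, y - P y⟫| := by rw [hid]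
    _ ≤ |⟪P x, P y⟫| + |⟪x - P x, y - P y⟫| + |⟪x, y⟫| := by
        have := abs_sub (⟪P x, P y⟫ + ⟪x, y⟫) (⟪x - P x, y - P y⟫)
        have := abs_add_le ⟪P x, P y⟫ ⟪x, y⟫
        linarith [abs_sub_abs_le_abs_sub (⟪P x, P y⟫ + ⟪x, y⟫) (⟪x - P x, y - P y⟫),
          abs_sub (⟪P x, P y⟫ + ⟪x, y⟫) (⟪x - P x, y - P y⟫)]
    _ ≤ ‖P x‖ * ‖P y‖ + ‖x - P x‖ * ‖y - P y‖ + |⟪x, y⟫| := by linarith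
end

section
/- (Richard inequality) For a real Hilbert space H, a unit vector z ∈ H, and any x, y ∈ H, |2⟨x,z⟩⟨y,z⟩ − ⟨x,y⟩| ≤ ‖x‖·‖y‖. -/
open RealInnerProductSpace


theorem stmt16 {H : Type*} [NormedAddCommGroup H] [InnerProductSpace ℝ H]
    (z : H) (hz : ‖z‖ = 1) (x y : H) :
    |2 * ⟪x, z⟫ * ⟪y, z⟫ - ⟪x, y⟫| ≤ ‖x‖ * ‖y‖ := by
  set w : H := (2 * ⟪x, z⟫) • z - x with hw
  have h1 : ⟪w, y⟫ = 2 * ⟪x, z⟫ * ⟪y, z⟫ - ⟪x, y⟫ := by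
    simp [hw, inner_sub_left, real_inner_smul_left, real_inner_comm z y]
  have hzz : ⟪z, z⟫ = (1 : ℝ) := by
    rw [real_inner_self_eq_norm_sq, hz]; norm_num
  have h2 : ‖w‖ = ‖x‖ := by
    have : ‖w‖ ^ 2 = ‖x‖ ^ 2 := by
      rw [← real_inner_self_eq_norm_sq, ← real_inner_self_eq_norm_sq, hw]
      simp only [inner_sub_left, inner_sub_right, real_inner_smul_left,
        real_inner_smul_right, hzz, real_inner_comm x z]
      ring
    exact (sq_eq_sq₀ (norm_nonneg w) (norm_nonneg x)).mp this
  calc |2 * ⟪x, z⟫ * ⟪y, z⟫ - ⟪x, y⟫| = |⟪w, y⟫| := by rw [h1]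
    _ ≤ ‖w‖ * ‖y‖ := abs_real_inner_le_norm w y
    _ = ‖x‖ * ‖y‖ := by rw [h2]
end

section
/- (Walker-type inequality) For square-integrable real random variables X, Y on a probability space, (E[XY])² ≤ E[X²]·E[Y²] − (|E[X]|·σ_Y − |E[Y]|·σ_X)², where σ_X := √(E[X²] − (E[X])²) and σ_Y := √(E[Y²] − (E[Y])²). -/
open MeasureTheory

lemma aux_integrable_mul {Ω : Type*} [MeasurableSpace Ω] {μ : Measure Ω}
    {f g : Ω → ℝ} (hf : MemLp f 2 μ) (hg : MemLp g 2 μ) :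
    Integrable (fun ω => f ω * g ω) μ := by
  have hb : Integrable (fun ω => f ω ^ 2 + g ω ^ 2) μ := hf.integrable_sq.add hg.integrable_sq
  refine Integrable.mono' hb
    (hf.aestronglyMeasurable.mul hg.aestronglyMeasurable) (ae_of_all _ fun ω => ?_)
  rw [Real.norm_eq_abs, abs_mul]
  nlinarith [sq_nonneg (|f ω| - |g ω|), sq_abs (f ω), sq_abs (g ω),
    abs_nonneg (f ω), abs_nonneg (g ω)]

lemma aux_cs {Ω : Type*} [MeasurableSpace Ω] {μ : Measure Ω}
    {f g : Ω → ℝ} (hf : MemLp f 2 μ) (hg : MemLp g 2 μ) :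
    (∫ ω, f ω * g ω ∂μ) ^ 2 ≤ (∫ ω, f ω ^ 2 ∂μ) * (∫ ω, g ω ^ 2 ∂μ) := by
  have hpq : Real.HolderConjugate 2 2 := by constructor <;> norm_num
  have hf2 : MemLp f (ENNReal.ofReal 2) μ := by
    simpa [ENNReal.ofReal_ofNat] using hf
  have hg2 : MemLp g (ENNReal.ofReal 2) μ := by
    simpa [ENNReal.ofReal_ofNat] using hg
  have H := MeasureTheory.integral_mul_norm_le_Lp_mul_Lq hpq hf2 hg2
  have hfn : (∫ ω, ‖f ω‖ ^ (2 : ℝ) ∂μ) = ∫ ω, f ω ^ 2 ∂μ := by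
    refine integral_congr_ae (ae_of_all _ fun ω => ?_)
    simp [Real.rpow_two, sq_abs]
  have hgn : (∫ ω, ‖g ω‖ ^ (2 : ℝ) ∂μ) = ∫ ω, g ω ^ 2 ∂μ := by
    refine integral_congr_ae (ae_of_all _ fun ω => ?_)
    simp [Real.rpow_two, sq_abs]
  rw [hfn, hgn] at H
  set A := ∫ ω, f ω ^ 2 ∂μ with hA'
  set B := ∫ ω, g ω ^ 2 ∂μ with hB'
  have hA : (0:ℝ) ≤ A := integral_nonneg fun ω => sq_nonneg _
  have hB : (0:ℝ) ≤ B := integral_nonneg fun ω => sq_nonneg _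
  have habs : |∫ ω, f ω * g ω ∂μ| ≤ ∫ ω, ‖f ω‖ * ‖g ω‖ ∂μ := by
    calc |∫ ω, f ω * g ω ∂μ| = ‖∫ ω, f ω * g ω ∂μ‖ := (Real.norm_eq_abs _).symm
      _ ≤ ∫ ω, ‖f ω * g ω‖ ∂μ := norm_integral_le_integral_norm _
      _ = ∫ ω, ‖f ω‖ * ‖g ω‖ ∂μ := by
          refine integral_congr_ae (ae_of_all _ fun ω => ?_)
          simp [Real.norm_eq_abs, abs_mul]
  have key : |∫ ω, f ω * g ω ∂μ| ≤ A ^ ((2:ℝ)⁻¹) * B ^ ((2:ℝ)⁻¹) := by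
    have h12 : (1:ℝ)/2 = (2:ℝ)⁻¹ := by norm_num
    rw [← h12]
    exact habs.trans H
  have hAm : (A ^ ((2:ℝ)⁻¹)) ^ 2 = A := by
    rw [← Real.rpow_natCast (A ^ ((2:ℝ)⁻¹)) 2, ← Real.rpow_mul hA]
    norm_num
  have hBm : (B ^ ((2:ℝ)⁻¹)) ^ 2 = B := by
    rw [← Real.rpow_natCast (B ^ ((2:ℝ)⁻¹)) 2, ← Real.rpow_mul hB]
    norm_num
  calc (∫ ω, f ω * g ω ∂μ) ^ 2 = |∫ ω, f ω * g ω ∂μ| ^ 2 := (sq_abs _).symm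
    _ ≤ (A ^ ((2:ℝ)⁻¹) * B ^ ((2:ℝ)⁻¹)) ^ 2 := pow_le_pow_left₀ (abs_nonneg _) key 2
    _ = A * B := by rw [mul_pow, hAm, hBm]

theorem stmt17 {Ω : Type*} [MeasurableSpace Ω] (μ : Measure Ω) [IsProbabilityMeasure μ]
    (X Y : Ω → ℝ) (hX : MemLp X 2 μ) (hY : MemLp Y 2 μ) :
    (∫ ω, X ω * Y ω ∂μ) ^ 2
      ≤ (∫ ω, X ω ^ 2 ∂μ) * (∫ ω, Y ω ^ 2 ∂μ)
        - (|∫ ω, X ω ∂μ| * Real.sqrt ((∫ ω, Y ω ^ 2 ∂μ) - (∫ ω, Y ω ∂μ) ^ 2)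
           - |∫ ω, Y ω ∂μ| * Real.sqrt ((∫ ω, X ω ^ 2 ∂μ) - (∫ ω, X ω ∂μ) ^ 2)) ^ 2 := by
  set a := ∫ ω, X ω ∂μ with ha
  set b := ∫ ω, Y ω ∂μ with hb
  have hX1 : Integrable X μ := hX.integrable one_le_two
  have hY1 : Integrable Y μ := hY.integrable one_le_two
  have hXY : Integrable (fun ω => X ω * Y ω) μ := aux_integrable_mul hX hY
  have hf : MemLp (fun ω => X ω - a) 2 μ := hX.sub (memLp_const a)
  have hg : MemLp (fun ω => Y ω - b) 2 μ := hY.sub (memLp_const b)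
  have iX2 : Integrable (fun ω => X ω ^ 2) μ := hX.integrable_sq
  have iY2 : Integrable (fun ω => Y ω ^ 2) μ := hY.integrable_sq
  have i1 : Integrable (fun ω => X ω ^ 2 - 2 * a * X ω) μ := iX2.sub (hX1.const_mul (2 * a))
  have i2 : Integrable (fun ω => Y ω ^ 2 - 2 * b * Y ω) μ := iY2.sub (hY1.const_mul (2 * b))
  have i3 : Integrable (fun ω => X ω * Y ω - b * X ω) μ := hXY.sub (hX1.const_mul b)
  have i4 : Integrable (fun ω => X ω * Y ω - b * X ω - a * Y ω) μ := i3.sub (hY1.const_mul a)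
  have hintf : (∫ ω, (X ω - a) ^ 2 ∂μ) = (∫ ω, X ω ^ 2 ∂μ) - a ^ 2 := by
    have h : ∀ ω, (X ω - a) ^ 2 = (X ω ^ 2 - 2 * a * X ω) + a ^ 2 := fun ω => by ring
    simp_rw [h]
    rw [integral_add i1 (integrable_const _), integral_sub iX2 (hX1.const_mul (2 * a)),
      integral_const_mul, integral_const]
    simp [← ha]
    ring
  have hintg : (∫ ω, (Y ω - b) ^ 2 ∂μ) = (∫ ω, Y ω ^ 2 ∂μ) - b ^ 2 := by
    have h : ∀ ω, (Y ω - b) ^ 2 = (Y ω ^ 2 - 2 * b * Y ω) + b ^ 2 := fun ω => by ring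
    simp_rw [h]
    rw [integral_add i2 (integrable_const _), integral_sub iY2 (hY1.const_mul (2 * b)),
      integral_const_mul, integral_const]
    simp [← hb]
    ring
  have hintfg : (∫ ω, (X ω - a) * (Y ω - b) ∂μ) = (∫ ω, X ω * Y ω ∂μ) - a * b := by
    have h : ∀ ω, (X ω - a) * (Y ω - b) = (X ω * Y ω - b * X ω - a * Y ω) + a * b :=
      fun ω => by ring
    simp_rw [h]
    rw [integral_add i4 (integrable_const _), integral_sub i3 (hY1.const_mul a),
      integral_sub hXY (hX1.const_mul b), integral_const_mul, integral_const_mul, integral_const]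
    simp [← ha, ← hb]
    ring
  have hcs := aux_cs hf hg
  rw [hintf, hintg, hintfg] at hcs
  set vX := (∫ ω, X ω ^ 2 ∂μ) - a ^ 2 with hvX
  set vY := (∫ ω, Y ω ^ 2 ∂μ) - b ^ 2 with hvY
  have hvX0 : 0 ≤ vX := by
    rw [← hintf]; exact integral_nonneg fun ω => sq_nonneg _
  have hvY0 : 0 ≤ vY := by
    rw [← hintg]; exact integral_nonneg fun ω => sq_nonneg _
  set C := (∫ ω, X ω * Y ω ∂μ) - a * b with hC
  set sX := Real.sqrt vX with hsX
  set sY := Real.sqrt vY with hsY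
  have hsX2 : sX ^ 2 = vX := Real.sq_sqrt hvX0
  have hsY2 : sY ^ 2 = vY := Real.sq_sqrt hvY0
  have hsX0 : 0 ≤ sX := Real.sqrt_nonneg _
  have hsY0 : 0 ≤ sY := Real.sqrt_nonneg _
  have hCle : |C| ≤ sX * sY := by
    have h := Real.sqrt_le_sqrt hcs
    rwa [Real.sqrt_sq_eq_abs, Real.sqrt_mul hvX0] at h
  have habC : a * b * C ≤ |a| * |b| * (sX * sY) := by
    calc a * b * C ≤ |a * b * C| := le_abs_self _
      _ = |a| * |b| * |C| := by rw [abs_mul, abs_mul]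
      _ ≤ |a| * |b| * (sX * sY) :=
          mul_le_mul_of_nonneg_left hCle (mul_nonneg (abs_nonneg _) (abs_nonneg _))
  have hIX : (∫ ω, X ω ^ 2 ∂μ) = a ^ 2 + vX := by rw [hvX]; ring
  have hIY : (∫ ω, Y ω ^ 2 ∂μ) = b ^ 2 + vY := by rw [hvY]; ring
  have hXYeq : (∫ ω, X ω * Y ω ∂μ) = a * b + C := by rw [hC]; ring
  rw [hIX, hIY, hXYeq]
  have hC2 : C ^ 2 ≤ sX ^ 2 * sY ^ 2 := by rw [hsX2, hsY2]; exact hcs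
  nlinarith [sq_abs a, sq_abs b, hsX2, hsY2, mul_nonneg hsX0 hsY0,
    mul_nonneg (abs_nonneg a) (abs_nonneg b), hC2, habC]
end

section
/- (Refined Hölder inequality) Let p, q > 1 with 1/p + 1/q = 1, and let X ∈ L^p, Y ∈ L^q be real random variables on a probability space. Set U := |X|^{p/2} and V := |Y|^{q/2} (both in L²). Then E[|XY|] ≤ ‖X‖_p·‖Y‖_q · ( 1/p² + 1/q² + (2/(pq))·√(1 − ((σ_V·E[|X|^{p/2}] − σ_U·E[|Y|^{q/2}]) / (‖X‖_p^{p/2}·‖Y‖_q^{q/2}))²) ) ≤ ‖X‖_p·‖Y‖_q, assuming ‖X‖_p > 0 and ‖Y‖_q > 0. -/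
open MeasureTheory

lemma aux_young {p q : ℝ} (hpq : p.HolderConjugate q) {x y : ℝ} (hx : 0 ≤ x) (hy : 0 ≤ y) :
    x * y ≤ x ^ p / p ^ 2 + y ^ q / q ^ 2 + 2 / (p * q) * (x ^ (p / 2) * y ^ (q / 2)) := by
  have hp0 : (0:ℝ) < p := hpq.pos
  have hq0 : (0:ℝ) < q := hpq.symm.pos
  have h := Real.young_inequality_of_nonneg (Real.rpow_nonneg hx (1/2))
    (Real.rpow_nonneg hy (1/2)) hpq
  rw [← Real.rpow_mul hx, ← Real.rpow_mul hy, (by ring : 1/2 * p = p/2),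
    (by ring : 1/2 * q = q/2)] at h
  have e1 : (x ^ (p/2)) ^ (2:ℕ) = x ^ p := by
    rw [← Real.rpow_natCast (x ^ (p/2)) 2, ← Real.rpow_mul hx]
    norm_num
  have e2 : (y ^ (q/2)) ^ (2:ℕ) = y ^ q := by
    rw [← Real.rpow_natCast (y ^ (q/2)) 2, ← Real.rpow_mul hy]
    norm_num
  have exy : (x ^ ((1:ℝ)/2) * y ^ ((1:ℝ)/2)) ^ (2:ℕ) = x * y := by
    rw [mul_pow, ← Real.rpow_natCast (x ^ ((1:ℝ)/2)) 2, ← Real.rpow_natCast (y ^ ((1:ℝ)/2)) 2,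
      ← Real.rpow_mul hx, ← Real.rpow_mul hy]
    norm_num
  calc x * y = (x ^ ((1:ℝ)/2) * y ^ ((1:ℝ)/2)) ^ (2:ℕ) := exy.symm
    _ ≤ (x ^ (p/2) / p + y ^ (q/2) / q) ^ (2:ℕ) := by
        apply pow_le_pow_left₀ (by positivity) h
    _ = x ^ p / p ^ 2 + y ^ q / q ^ 2 + 2 / (p * q) * (x ^ (p/2) * y ^ (q/2)) := by
        rw [add_sq, div_pow, div_pow, e1, e2]
        field_simp
        ring

set_option maxHeartbeats 1000000 in
theorem stmt19 {Ω : Type*} [MeasurableSpace Ω] (μ : Measure Ω) [IsProbabilityMeasure μ]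
    (p q : ℝ) (hp : 1 < p) (hq : 1 < q) (hpq : 1 / p + 1 / q = 1)
    (X Y : Ω → ℝ)
    (hX : MemLp X (ENNReal.ofReal p) μ) (hY : MemLp Y (ENNReal.ofReal q) μ)
    (Xp : ℝ) (hXp : Xp = (∫ ω, |X ω| ^ p ∂μ) ^ (1 / p))
    (Yq : ℝ) (hYq : Yq = (∫ ω, |Y ω| ^ q ∂μ) ^ (1 / q))
    (hXpos : 0 < Xp) (hYpos : 0 < Yq)
    (U V : Ω → ℝ) (hU : U = fun ω => |X ω| ^ (p / 2)) (hV : V = fun ω => |Y ω| ^ (q / 2))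
    (σU σV : ℝ)
    (hσU : σU = Real.sqrt ((∫ ω, U ω ^ 2 ∂μ) - (∫ ω, U ω ∂μ) ^ 2))
    (hσV : σV = Real.sqrt ((∫ ω, V ω ^ 2 ∂μ) - (∫ ω, V ω ∂μ) ^ 2)) :
    (∫ ω, |X ω * Y ω| ∂μ)
      ≤ Xp * Yq * (1 / p ^ 2 + 1 / q ^ 2
          + (2 / (p * q)) * Real.sqrt (1 -
              ((σV * (∫ ω, U ω ∂μ) - σU * (∫ ω, V ω ∂μ))
                / (Xp ^ (p / 2) * Yq ^ (q / 2))) ^ 2))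
      ∧ Xp * Yq * (1 / p ^ 2 + 1 / q ^ 2
          + (2 / (p * q)) * Real.sqrt (1 -
              ((σV * (∫ ω, U ω ∂μ) - σU * (∫ ω, V ω ∂μ))
                / (Xp ^ (p / 2) * Yq ^ (q / 2))) ^ 2)) ≤ Xp * Yq := by
  have hp0 : (0:ℝ) < p := one_pos.trans hp
  have hq0 : (0:ℝ) < q := one_pos.trans hq
  have hpq' : p.HolderConjugate q := Real.holderConjugate_iff.2 ⟨hp, by simpa [← one_div] using hpq⟩
  set a := ∫ ω, U ω ∂μ with ha
  set b := ∫ ω, V ω ∂μ with hb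
  set A := ∫ ω, |X ω| ^ p ∂μ with hA
  set B := ∫ ω, |Y ω| ^ q ∂μ with hB
  clear_value a b A B
  -- integrability of |X|^p, |Y|^q
  have hXint : Integrable (fun ω => |X ω| ^ p) μ := by
    have h := hX.integrable_norm_rpow (by simp [ENNReal.ofReal_eq_zero]; linarith)
      ENNReal.ofReal_ne_top
    simpa [ENNReal.toReal_ofReal hp0.le, Real.norm_eq_abs] using h
  have hYint : Integrable (fun ω => |Y ω| ^ q) μ := by
    have h := hY.integrable_norm_rpow (by simp [ENNReal.ofReal_eq_zero]; linarith)
      ENNReal.ofReal_ne_top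
    simpa [ENNReal.toReal_ofReal hq0.le, Real.norm_eq_abs] using h
  have hAnn : (0:ℝ) ≤ A := by
    rw [hA]; exact integral_nonneg fun ω => Real.rpow_nonneg (abs_nonneg _) _
  have hBnn : (0:ℝ) ≤ B := by
    rw [hB]; exact integral_nonneg fun ω => Real.rpow_nonneg (abs_nonneg _) _
  have hXpA : Xp ^ p = A := by
    rw [hXp, ← Real.rpow_mul hAnn, one_div_mul_cancel hp0.ne', Real.rpow_one]
  have hYqB : Yq ^ q = B := by
    rw [hYq, ← Real.rpow_mul hBnn, one_div_mul_cancel hq0.ne', Real.rpow_one]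
  have hApos : 0 < A := by rw [← hXpA]; exact Real.rpow_pos_of_pos hXpos p
  have hBpos : 0 < B := by rw [← hYqB]; exact Real.rpow_pos_of_pos hYpos q
  have hXpsq : Xp ^ (p/2) = Real.sqrt A := by
    rw [Real.sqrt_eq_rpow, ← hXpA, ← Real.rpow_mul hXpos.le, mul_one_div]
  have hYqsq : Yq ^ (q/2) = Real.sqrt B := by
    rw [Real.sqrt_eq_rpow, ← hYqB, ← Real.rpow_mul hYpos.le, mul_one_div]
  have hsApos : 0 < Real.sqrt A := Real.sqrt_pos.2 hApos
  have hsBpos : 0 < Real.sqrt B := Real.sqrt_pos.2 hBpos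
  -- U, V measurability and L² membership
  have hUmeas : AEStronglyMeasurable U μ := by
    rw [hU]
    exact (Real.continuous_rpow_const (by positivity)).comp_aestronglyMeasurable
      (by simpa [Real.norm_eq_abs] using hX.aestronglyMeasurable.norm)
  have hVmeas : AEStronglyMeasurable V μ := by
    rw [hV]
    exact (Real.continuous_rpow_const (by positivity)).comp_aestronglyMeasurable
      (by simpa [Real.norm_eq_abs] using hY.aestronglyMeasurable.norm)
  have hUsq : ∀ ω, U ω ^ (2:ℕ) = |X ω| ^ p := by
    intro ω
    rw [hU]
    simp only
    rw [← Real.rpow_natCast (|X ω| ^ (p/2)) 2, ← Real.rpow_mul (abs_nonneg _)]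
    norm_num
  have hVsq : ∀ ω, V ω ^ (2:ℕ) = |Y ω| ^ q := by
    intro ω
    rw [hV]
    simp only
    rw [← Real.rpow_natCast (|Y ω| ^ (q/2)) 2, ← Real.rpow_mul (abs_nonneg _)]
    norm_num
  have hU2 : MemLp U 2 μ := (memLp_two_iff_integrable_sq hUmeas).2
    (hXint.congr (ae_of_all _ fun ω => (hUsq ω).symm))
  have hV2 : MemLp V 2 μ := (memLp_two_iff_integrable_sq hVmeas).2
    (hYint.congr (ae_of_all _ fun ω => (hVsq ω).symm))
  have hUnn : ∀ ω, 0 ≤ U ω := by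
    intro ω; rw [hU]; exact Real.rpow_nonneg (abs_nonneg _) _
  have hVnn : ∀ ω, 0 ≤ V ω := by
    intro ω; rw [hV]; exact Real.rpow_nonneg (abs_nonneg _) _
  have hIntU2 : ∫ ω, U ω ^ 2 ∂μ = A := by
    rw [hA]; exact integral_congr_ae (ae_of_all _ hUsq)
  have hIntV2 : ∫ ω, V ω ^ 2 ∂μ = B := by
    rw [hB]; exact integral_congr_ae (ae_of_all _ hVsq)
  have hσU' : σU = Real.sqrt (A - a^2) := by rw [hσU, hIntU2]
  have hσV' : σV = Real.sqrt (B - b^2) := by rw [hσV, hIntV2]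
  have hUint : Integrable U μ := hU2.integrable one_le_two
  have hVint : Integrable V μ := hV2.integrable one_le_two
  have habnn : 0 ≤ a := by rw [ha]; exact integral_nonneg hUnn
  have hbbnn : 0 ≤ b := by rw [hb]; exact integral_nonneg hVnn
  -- variance computations
  have hIaU : Integrable (fun ω => U ω ^ 2 - 2*a * U ω) μ := by
    exact hU2.integrable_sq.sub (hUint.const_mul _)
  have hIaV : Integrable (fun ω => V ω ^ 2 - 2*b * V ω) μ := by
    exact hV2.integrable_sq.sub (hVint.const_mul _)
  have hVarU : ∫ ω, (U ω - a)^2 ∂μ = A - a^2 := by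
    have e : ∀ ω, (U ω - a)^2 = (U ω^2 - 2*a * U ω) + a^2 := fun ω => by ring
    calc ∫ ω, (U ω - a)^2 ∂μ = ∫ ω, ((U ω^2 - 2*a * U ω) + a^2) ∂μ :=
          integral_congr_ae (ae_of_all _ e)
      _ = (∫ ω, (U ω^2 - 2*a * U ω) ∂μ) + a^2 := by
          rw [integral_add hIaU (integrable_const _)]
          simp
      _ = A - 2*a*a + a^2 := by
          rw [integral_sub hU2.integrable_sq (hUint.const_mul _), integral_const_mul, hIntU2, ← ha]
      _ = A - a^2 := by ring
  have hVarV : ∫ ω, (V ω - b)^2 ∂μ = B - b^2 := by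
    have e : ∀ ω, (V ω - b)^2 = (V ω^2 - 2*b * V ω) + b^2 := fun ω => by ring
    calc ∫ ω, (V ω - b)^2 ∂μ = ∫ ω, ((V ω^2 - 2*b * V ω) + b^2) ∂μ :=
          integral_congr_ae (ae_of_all _ e)
      _ = (∫ ω, (V ω^2 - 2*b * V ω) ∂μ) + b^2 := by
          rw [integral_add hIaV (integrable_const _)]
          simp
      _ = B - 2*b*b + b^2 := by
          rw [integral_sub hV2.integrable_sq (hVint.const_mul _), integral_const_mul, hIntV2, ← hb]
      _ = B - b^2 := by ring
  have hvarUnn : 0 ≤ A - a^2 := by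
    rw [← hVarU]; exact integral_nonneg fun ω => sq_nonneg _
  have hvarVnn : 0 ≤ B - b^2 := by
    rw [← hVarV]; exact integral_nonneg fun ω => sq_nonneg _
  have hσUsq : σU^2 = A - a^2 := by rw [hσU']; exact Real.sq_sqrt hvarUnn
  have hσVsq : σV^2 = B - b^2 := by rw [hσV']; exact Real.sq_sqrt hvarVnn
  have hσUnn : 0 ≤ σU := hσU' ▸ Real.sqrt_nonneg _
  have hσVnn : 0 ≤ σV := hσV' ▸ Real.sqrt_nonneg _
  -- integrability of products
  have hUV : Integrable (fun ω => U ω * V ω) μ := by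
    refine Integrable.mono' ((hU2.integrable_sq.add hV2.integrable_sq).div_const 2)
      (hUmeas.mul hVmeas) (ae_of_all _ fun ω => ?_)
    simp only [Pi.add_apply, Pi.div_apply]
    rw [Real.norm_eq_abs, abs_mul, abs_of_nonneg (hUnn ω), abs_of_nonneg (hVnn ω)]
    linarith [two_mul_le_add_sq (U ω) (V ω)]
  have hIc1 : Integrable (fun ω => U ω * V ω - b * U ω) μ := by
    exact hUV.sub (hUint.const_mul b)
  have hIc2 : Integrable (fun ω => U ω * V ω - b * U ω - a * V ω) μ := by
    exact hIc1.sub (hVint.const_mul a)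
  have hUVc : Integrable (fun ω => (U ω - a) * (V ω - b)) μ := by
    have e : (fun ω => (U ω - a) * (V ω - b))
        = fun ω => (U ω * V ω - b * U ω - a * V ω) + a*b := funext fun ω => by ring
    rw [e]
    exact hIc2.add (integrable_const _)
  -- covariance bound (Cauchy–Schwarz)
  have hcov : (∫ ω, U ω * V ω ∂μ) - a*b ≤ σU * σV := by
    have h1 : ∫ ω, (U ω - a)*(V ω - b) ∂μ = (∫ ω, U ω * V ω ∂μ) - a*b := by
      have e : ∀ ω, (U ω - a)*(V ω - b) = (U ω * V ω - b * U ω - a * V ω) + a*b :=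
        fun ω => by ring
      calc ∫ ω, (U ω - a)*(V ω - b) ∂μ
          = ∫ ω, ((U ω * V ω - b * U ω - a * V ω) + a*b) ∂μ :=
            integral_congr_ae (ae_of_all _ e)
        _ = (∫ ω, (U ω * V ω - b * U ω - a * V ω) ∂μ) + a*b := by
            rw [integral_add hIc2 (integrable_const _)]
            simp
        _ = ((∫ ω, U ω * V ω ∂μ) - b*a - a*b) + a*b := by
            rw [integral_sub hIc1 (hVint.const_mul a), integral_sub hUV (hUint.const_mul b),
              integral_const_mul, integral_const_mul, ← ha, ← hb]
        _ = (∫ ω, U ω * V ω ∂μ) - a*b := by ring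
    have hf2 : MemLp (fun ω => |U ω - a|) (ENNReal.ofReal 2) μ := by
      rw [show ENNReal.ofReal (2:ℝ) = 2 by norm_num [ENNReal.ofReal_ofNat]]
      have h0 := (hU2.sub (memLp_const a)).norm
      simp only [Pi.sub_apply, Real.norm_eq_abs] at h0
      exact h0
    have hg2 : MemLp (fun ω => |V ω - b|) (ENNReal.ofReal 2) μ := by
      rw [show ENNReal.ofReal (2:ℝ) = 2 by norm_num [ENNReal.ofReal_ofNat]]
      have h0 := (hV2.sub (memLp_const b)).norm
      simp only [Pi.sub_apply, Real.norm_eq_abs] at h0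
      exact h0
    have conj22 : (2:ℝ).HolderConjugate 2 := Real.holderConjugate_iff.2 ⟨one_lt_two, by norm_num⟩
    have h2 : ∫ ω, (U ω - a)*(V ω - b) ∂μ ≤ ∫ ω, |U ω - a| * |V ω - b| ∂μ := by
      refine integral_mono hUVc (hUVc.abs.congr (ae_of_all _ fun ω => abs_mul _ _)) fun ω => ?_
      exact (le_abs_self _).trans_eq (abs_mul _ _)
    have h3 := integral_mul_le_Lp_mul_Lq_of_nonneg conj22
      (ae_of_all μ fun ω => abs_nonneg (U ω - a)) (ae_of_all μ fun ω => abs_nonneg (V ω - b))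
      hf2 hg2
    have e4 : ∫ ω, |U ω - a| ^ (2:ℝ) ∂μ = A - a^2 := by
      rw [← hVarU]
      refine integral_congr_ae (ae_of_all _ fun ω => ?_)
      show |U ω - a| ^ (2:ℝ) = (U ω - a)^2
      rw [Real.rpow_two, sq_abs]
    have e5 : ∫ ω, |V ω - b| ^ (2:ℝ) ∂μ = B - b^2 := by
      rw [← hVarV]
      refine integral_congr_ae (ae_of_all _ fun ω => ?_)
      show |V ω - b| ^ (2:ℝ) = (V ω - b)^2
      rw [Real.rpow_two, sq_abs]
    rw [e4, e5, ← Real.sqrt_eq_rpow, ← Real.sqrt_eq_rpow, ← hσU', ← hσV'] at h3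
    calc (∫ ω, U ω * V ω ∂μ) - a*b = ∫ ω, (U ω - a)*(V ω - b) ∂μ := h1.symm
      _ ≤ ∫ ω, |U ω - a| * |V ω - b| ∂μ := h2
      _ ≤ σU * σV := h3
  -- algebraic identity
  set N := σV * a - σU * b with hN
  clear_value N
  have hkey : (a*b + σU*σV)^2 = A*B - N^2 := by
    have e : (a*b + σU*σV)^2 = (a^2 + σU^2)*(b^2 + σV^2) - N^2 := by rw [hN]; ring
    rw [e, hσUsq, hσVsq]
    ring
  have hABN : 0 ≤ A*B - N^2 := hkey ▸ sq_nonneg _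
  have hImax : (∫ ω, U ω * V ω ∂μ) ≤ Real.sqrt (A*B - N^2) := by
    have e : a*b + σU*σV = Real.sqrt (A*B - N^2) := by
      rw [← hkey, Real.sqrt_sq (by positivity)]
    linarith [hcov]
  -- the sqrt identity
  have hfrac : Real.sqrt (A*B - N^2) / (Real.sqrt A * Real.sqrt B)
      = Real.sqrt (1 - (N/(Real.sqrt A * Real.sqrt B))^2) := by
    have hS2 : (Real.sqrt A * Real.sqrt B)^2 = A*B := by
      rw [mul_pow, Real.sq_sqrt hApos.le, Real.sq_sqrt hBpos.le]
    rw [div_pow, hS2, show (1 : ℝ) - N^2/(A*B) = (A*B - N^2)/(A*B) by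
      field_simp]
    rw [Real.sqrt_div hABN, Real.sqrt_mul hApos.le]
  have hIdiv : (∫ ω, U ω * V ω ∂μ) / (Real.sqrt A * Real.sqrt B)
      ≤ Real.sqrt (1 - (N/(Real.sqrt A * Real.sqrt B))^2) := by
    rw [← hfrac]
    gcongr
  -- pointwise bound
  set c1 : ℝ := Xp*Yq/p^2/A with hc1
  set c2 : ℝ := Xp*Yq/q^2/B with hc2
  set c3 : ℝ := 2*Xp*Yq/((p*q)*(Real.sqrt A*Real.sqrt B)) with hc3
  clear_value c1 c2 c3
  have hpoint : ∀ ω, |X ω * Y ω| ≤ c1 * |X ω|^p + c2 * |Y ω|^q + c3 * (U ω * V ω) := by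
    intro ω
    have hx : (0:ℝ) ≤ |X ω| / Xp := by positivity
    have hy : (0:ℝ) ≤ |Y ω| / Yq := by positivity
    have h := aux_young hpq' hx hy
    have ex1 : (|X ω|/Xp)^p = |X ω|^p / A := by
      rw [Real.div_rpow (abs_nonneg _) hXpos.le, hXpA]
    have ey1 : (|Y ω|/Yq)^q = |Y ω|^q / B := by
      rw [Real.div_rpow (abs_nonneg _) hYpos.le, hYqB]
    have ex2 : (|X ω|/Xp)^(p/2) = U ω / Real.sqrt A := by
      rw [Real.div_rpow (abs_nonneg _) hXpos.le, hXpsq, hU]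
    have ey2 : (|Y ω|/Yq)^(q/2) = V ω / Real.sqrt B := by
      rw [Real.div_rpow (abs_nonneg _) hYpos.le, hYqsq, hV]
    rw [ex1, ey1, ex2, ey2] at h
    have h2 := mul_le_mul_of_nonneg_left h (le_of_lt (mul_pos hXpos hYpos))
    have e0 : |X ω * Y ω| = Xp*Yq * (|X ω|/Xp * (|Y ω|/Yq)) := by
      rw [abs_mul]
      field_simp
    rw [e0]
    refine h2.trans_eq ?_
    rw [hc1, hc2, hc3]
    field_simp [hp0.ne', hq0.ne', hApos.ne', hBpos.ne', hsApos.ne', hsBpos.ne']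
  -- integrating the bound
  have hI12 : Integrable (fun ω => c1 * |X ω|^p + c2 * |Y ω|^q) μ := by
    exact (hXint.const_mul c1).add (hYint.const_mul c2)
  have hbound : Integrable (fun ω => c1 * |X ω|^p + c2 * |Y ω|^q + c3 * (U ω * V ω)) μ := by
    exact hI12.add (hUV.const_mul c3)
  have hIntBound : ∫ ω, (c1 * |X ω|^p + c2 * |Y ω|^q + c3 * (U ω * V ω)) ∂μ
      = c1 * A + c2 * B + c3 * (∫ ω, U ω * V ω ∂μ) := by
    rw [integral_add hI12 (hUV.const_mul c3),
      integral_add (hXint.const_mul c1) (hYint.const_mul c2),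
      integral_const_mul, integral_const_mul, integral_const_mul, ← hA, ← hB]
  have hmain : (∫ ω, |X ω * Y ω| ∂μ)
      ≤ c1 * A + c2 * B + c3 * (∫ ω, U ω * V ω ∂μ) := by
    rw [← hIntBound]
    exact integral_mono_of_nonneg (ae_of_all _ fun ω => abs_nonneg _) hbound
      (ae_of_all _ hpoint)
  -- assembling
  rw [hXpsq, hYqsq]
  set R := Real.sqrt (1 - (N/(Real.sqrt A * Real.sqrt B))^2) with hR
  have hRnn : 0 ≤ R := Real.sqrt_nonneg _
  have hR1 : R ≤ 1 := by
    rw [hR]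
    exact Real.sqrt_le_one.2 (sub_le_self 1 (sq_nonneg _))
  have e1 : c1 * A = Xp*Yq*(1/p^2) := by
    rw [hc1]; field_simp [hp0.ne', hApos.ne']
  have e2 : c2 * B = Xp*Yq*(1/q^2) := by
    rw [hc2]; field_simp [hq0.ne', hBpos.ne']
  have e3 : c3 * (∫ ω, U ω * V ω ∂μ)
      = Xp*Yq*(2/(p*q)) * ((∫ ω, U ω * V ω ∂μ)/(Real.sqrt A * Real.sqrt B)) := by
    rw [hc3]; ring
  have hco : 0 ≤ Xp*Yq*(2/(p*q)) := by positivity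
  constructor
  · calc (∫ ω, |X ω * Y ω| ∂μ) ≤ c1 * A + c2 * B + c3 * (∫ ω, U ω * V ω ∂μ) := hmain
      _ ≤ Xp*Yq*(1/p^2) + Xp*Yq*(1/q^2) + Xp*Yq*(2/(p*q)) * R := by
          rw [e1, e2, e3]
          have := mul_le_mul_of_nonneg_left hIdiv hco
          linarith
      _ = Xp * Yq * (1/p^2 + 1/q^2 + 2/(p*q) * R) := by ring
  · have hsum : 1/p^2 + 1/q^2 + 2/(p*q) * R ≤ 1 := by
      have h1 : (1/p + 1/q)^2 = 1 := by rw [hpq]; norm_num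
      have h2 : 2/(p*q) * R ≤ 2/(p*q) :=
        mul_le_of_le_one_right (by positivity) hR1
      have h3 : 1/p^2 + 1/q^2 + 2/(p*q) = (1/p + 1/q)^2 := by
        field_simp
        ring
      linarith
    calc Xp * Yq * (1/p^2 + 1/q^2 + 2/(p*q) * R) ≤ Xp * Yq * 1 :=
          mul_le_mul_of_nonneg_left hsum (by positivity)
      _ = Xp * Yq := mul_one _
end
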